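/- Let H ↪ H₀ be a compact dense injective embedding of Hilbert spaces and A : H → H the bounded positive compact self-adjoint operator with (Au, v)_H = (u, v)_{H₀}. Define F[f] = ‖f‖_H² − ‖f‖_{H₀}² and Ω = { f ∈ H : ‖f‖_{H₀} = 1 }. If f₀ ∈ Ω minimizes F over Ω with minimum value λ = F[f₀], then A f₀ = (1/(λ+1)) f₀, and 1/(λ+1) is the largest eigenvalue of A. Conversely, if μ is any eigenvalue of A with normalized eigenvector v_μ ∈ Ω, then F[v_μ] = 1/μ − 1 ≥ λ. -/

import Mathlib

open scoped ComplexInnerProductSpace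

private lemma cre_inner_self {H : Type*} [NormedAddCommGroup H] [InnerProductSpace ℂ H]
    (x : H) : Complex.re ⟪x, x⟫ = ‖x‖ ^ 2 := by
  simpa using inner_self_eq_norm_sq (𝕜 := ℂ) x

private lemma quad_coeff_zero (a b : ℝ) (h : ∀ t : ℝ, 0 ≤ a * t ^ 2 + b * t) : b = 0 := by
  by_contra hb
  have ha : (0:ℝ) < |a| + 1 := by positivity
  have hb2 : (0:ℝ) < b ^ 2 := by positivity
  have h1 := h (-b / (|a| + 1))
  have h2 : a ≤ |a| := le_abs_self a
  have key : 0 ≤ (a - (|a| + 1)) * b ^ 2 / (|a| + 1) ^ 2 := by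
    have : a * (-b / (|a| + 1)) ^ 2 + b * (-b / (|a| + 1))
        = (a - (|a| + 1)) * b ^ 2 / (|a| + 1) ^ 2 := by
      field_simp; ring
    linarith [this ▸ h1]
  have h3 : (a - (|a| + 1)) * b ^ 2 < 0 := by nlinarith
  have h5 : 0 ≤ (a - (|a| + 1)) * b ^ 2 := by
    have := mul_nonneg key (sq_nonneg (|a| + 1))
    rwa [div_mul_cancel₀ _ (pow_pos ha 2).ne'] at this
  linarith

/-- Euler–Lagrange equation in the Hilbert setting: for a compact dense injective embedding
`T : H ↪ H₀` of Hilbert spaces, `A : H → H` with `(Au,v)_H = (Tu,Tv)_{H₀}`,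
`F[f] = ‖f‖_H² − ‖f‖_{H₀}²` and `Ω = {f : ‖f‖_{H₀} = 1}`: if `f₀ ∈ Ω` minimizes `F` over `Ω`
with minimum `λ = F[f₀]`, then `A f₀ = (1/(λ+1)) f₀` and `1/(λ+1)` is the largest eigenvalue
of `A`; moreover any eigenvalue `μ` of `A` with normalized eigenvector `v_μ ∈ Ω` satisfies
`F[v_μ] = 1/μ − 1 ≥ λ`. -/
theorem stmt_14 {H H₀ : Type*}
    [NormedAddCommGroup H] [InnerProductSpace ℂ H] [CompleteSpace H]
    [NormedAddCommGroup H₀] [InnerProductSpace ℂ H₀] [CompleteSpace H₀]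
    (T : H →L[ℂ] H₀) (hTinj : Function.Injective T) (hTcomp : IsCompactOperator T)
    (hTdense : DenseRange T)
    (A : H →L[ℂ] H) (hA : ∀ u v : H, ⟪A u, v⟫ = ⟪T u, T v⟫)
    (F : H → ℝ) (hF : ∀ f : H, F f = ‖f‖ ^ 2 - ‖T f‖ ^ 2)
    (f₀ : H) (hf₀ : ‖T f₀‖ = 1) (hmin : ∀ f : H, ‖T f‖ = 1 → F f₀ ≤ F f)
    (lam : ℝ) (hlam : lam = F f₀) :
    A f₀ = ((1 / (lam + 1) : ℝ) : ℂ) • f₀ ∧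
    (∀ μ : ℝ, (∃ v : H, v ≠ 0 ∧ A v = (μ : ℂ) • v) → μ ≤ 1 / (lam + 1)) ∧
    (∀ μ : ℝ, ∀ v : H, A v = (μ : ℂ) • v → ‖T v‖ = 1 →
      F v = 1 / μ - 1 ∧ lam ≤ 1 / μ - 1) := by
  -- basic facts
  have hf₀ne : f₀ ≠ 0 := by
    intro h; rw [h, map_zero, norm_zero] at hf₀; norm_num at hf₀
  have hn0 : (0:ℝ) < ‖f₀‖ ^ 2 := pow_pos (norm_pos_iff.mpr hf₀ne) 2
  have hlam1 : lam + 1 = ‖f₀‖ ^ 2 := by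
    rw [hlam, hF, hf₀]; ring
  set μ : ℝ := 1 / (lam + 1) with hμdef
  have hμpos : 0 < μ := by rw [hμdef, hlam1]; exact one_div_pos.mpr hn0
  have hμf₀ : μ * ‖f₀‖ ^ 2 = 1 := by
    rw [hμdef, hlam1]; field_simp
  -- the key Rayleigh inequality: ∀ f, ‖T f‖² ≤ μ ‖f‖²
  have key : ∀ f : H, ‖T f‖ ^ 2 ≤ μ * ‖f‖ ^ 2 := by
    intro f
    rcases eq_or_ne f 0 with rfl | hf
    · simp [le_of_lt, hμpos]
    · have hTf : T f ≠ 0 := fun h => hf (hTinj (by simpa using h))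
      have hc : (0:ℝ) < ‖T f‖ := norm_pos_iff.mpr hTf
      set g : H := ((‖T f‖ : ℂ))⁻¹ • f with hg
      have hTg : ‖T g‖ = 1 := by
        rw [hg, map_smul, norm_smul]
        simp [norm_inv, inv_mul_cancel₀ hc.ne']
      have hgn : ‖g‖ = ‖T f‖⁻¹ * ‖f‖ := by
        rw [hg, norm_smul]; simp
      have := hmin g hTg
      rw [hF, hF, hf₀, hTg, hgn] at this
      have h2 : ‖f₀‖ ^ 2 ≤ (‖T f‖⁻¹ * ‖f‖) ^ 2 := by linarith
      have h3 : ‖T f‖ ^ 2 * ‖f₀‖ ^ 2 ≤ ‖f‖ ^ 2 := by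
        have := mul_le_mul_of_nonneg_left h2 (sq_nonneg ‖T f‖)
        calc ‖T f‖ ^ 2 * ‖f₀‖ ^ 2 ≤ ‖T f‖ ^ 2 * (‖T f‖⁻¹ * ‖f‖) ^ 2 := this
          _ = ‖f‖ ^ 2 := by field_simp
      calc ‖T f‖ ^ 2 = μ * (‖T f‖ ^ 2 * ‖f₀‖ ^ 2) := by
            rw [← mul_assoc, mul_comm μ, mul_assoc, hμf₀, mul_one]
        _ ≤ μ * ‖f‖ ^ 2 := by
            exact mul_le_mul_of_nonneg_left h3 hμpos.le
  -- Euler–Lagrange: A f₀ = μ f₀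
  have hEL : A f₀ = ((μ : ℝ) : ℂ) • f₀ := by
    have hre : ∀ w : H, Complex.re ⟪A f₀ - ((μ:ℝ):ℂ) • f₀, w⟫ = 0 := by
      intro w
      have hquad : ∀ t : ℝ, 0 ≤ (μ * ‖w‖ ^ 2 - ‖T w‖ ^ 2) * t ^ 2 +
          (2 * (μ * Complex.re ⟪f₀, w⟫ - Complex.re ⟪T f₀, T w⟫)) * t := by
        intro t
        have hk := key (f₀ + (t : ℂ) • w)
        have e1 : ‖f₀ + (t : ℂ) • w‖ ^ 2
            = ‖f₀‖ ^ 2 + 2 * (t * Complex.re ⟪f₀, w⟫) + t ^ 2 * ‖w‖ ^ 2 := by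
          rw [norm_add_sq (𝕜 := ℂ), inner_smul_right, norm_smul]
          simp [mul_pow, Complex.norm_real, sq_abs]
        have e2 : ‖T (f₀ + (t : ℂ) • w)‖ ^ 2
            = ‖T f₀‖ ^ 2 + 2 * (t * Complex.re ⟪T f₀, T w⟫) + t ^ 2 * ‖T w‖ ^ 2 := by
          rw [map_add, map_smul, norm_add_sq (𝕜 := ℂ), inner_smul_right, norm_smul]
          simp [mul_pow, Complex.norm_real, sq_abs]
        rw [e1, e2, hf₀] at hk
        nlinarith [hk, hμf₀]
      have hb := quad_coeff_zero _ _ hquad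
      have hb' : μ * Complex.re ⟪f₀, w⟫ - Complex.re ⟪T f₀, T w⟫ = 0 := by linarith
      rw [inner_sub_left, hA, inner_smul_left]
      simp only [Complex.sub_re, Complex.mul_re]
      simp [Complex.conj_ofReal]
      linarith
    have := hre (A f₀ - ((μ:ℝ):ℂ) • f₀)
    rw [cre_inner_self] at this
    have : A f₀ - ((μ:ℝ):ℂ) • f₀ = 0 := by
      rwa [pow_eq_zero_iff (by norm_num), norm_eq_zero] at this
    exact sub_eq_zero.mp this
  refine ⟨hEL, ?_, ?_⟩
  · rintro ν ⟨v, hv, hAv⟩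
    have hre1 : Complex.re ⟪A v, v⟫ = ‖T v‖ ^ 2 := by
      rw [hA, cre_inner_self]
    have hre2 : Complex.re ⟪A v, v⟫ = ν * ‖v‖ ^ 2 := by
      rw [hAv, inner_smul_left, Complex.conj_ofReal, Complex.re_ofReal_mul, cre_inner_self]
    have hkv := key v
    have hvpos : (0:ℝ) < ‖v‖ ^ 2 := pow_pos (norm_pos_iff.mpr hv) 2
    have : ν * ‖v‖ ^ 2 ≤ μ * ‖v‖ ^ 2 := by rw [← hre2, hre1]; exact hkv
    exact le_of_mul_le_mul_right (by linarith [this]) hvpos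
  · intro ν v hAv hTv
    have hre1 : Complex.re ⟪A v, v⟫ = ‖T v‖ ^ 2 := by
      rw [hA, cre_inner_self]
    have hre2 : Complex.re ⟪A v, v⟫ = ν * ‖v‖ ^ 2 := by
      rw [hAv, inner_smul_left, Complex.conj_ofReal, Complex.re_ofReal_mul, cre_inner_self]
    have hν1 : ν * ‖v‖ ^ 2 = 1 := by rw [← hre2, hre1, hTv]; norm_num
    have hνne : ν ≠ 0 := by
      intro h; rw [h, zero_mul] at hν1; norm_num at hν1
    have hvsq : ‖v‖ ^ 2 = 1 / ν := by field_simp; linarith [hν1]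
    have hFv : F v = 1 / ν - 1 := by rw [hF, hvsq, hTv]; ring
    exact ⟨hFv, by rw [← hFv, hlam]; exact hmin v hTv⟩
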